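/- For all integers a, b with 0 ≤ a ≤ b, one has ∑_{j=0}^{a} ∏_{i=0}^{j−1} ((a−i)/(b−i)) = (b+1)/(b−a+1), where the empty product (j = 0) equals 1 and division is over the reals. -/

import Mathlib

theorem stmt1 (a b : ℕ) (hab : a ≤ b) :
    ∑ j ∈ Finset.range (a+1), ∏ i ∈ Finset.range j, (((a:ℝ) - i) / ((b:ℝ) - i))
      = ((b:ℝ) + 1) / ((b:ℝ) - (a:ℝ) + 1) := by
  induction a generalizing b with
  | zero =>
    simp only [zero_add, Finset.sum_range_one, Finset.prod_range_zero, Nat.cast_zero,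
      sub_zero]
    rw [div_self (by positivity)]
  | succ a ih =>
    obtain ⟨b', rfl⟩ : ∃ b', b = b' + 1 :=
      ⟨b - 1, by omega⟩
    have hab' : a ≤ b' := by omega
    rw [Finset.sum_range_succ']
    have key : ∀ j, ∏ i ∈ Finset.range (j+1), (((a+1:ℕ):ℝ) - i) / (((b'+1:ℕ):ℝ) - i)
        = (((a:ℝ)+1)/((b':ℝ)+1)) * ∏ i ∈ Finset.range j, (((a:ℝ) - i) / ((b':ℝ) - i)) := by
      intro j
      rw [Finset.prod_range_succ']
      push_cast
      rw [mul_comm]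
      congr 1
      · ring_nf
      · apply Finset.prod_congr rfl
        intro i _
        ring_nf
    simp only [key]
    rw [← Finset.mul_sum, ih b' hab']
    have h1 : ((b':ℝ) + 1) ≠ 0 := by positivity
    have h2 : ((b':ℝ) - (a:ℝ) + 1) ≠ 0 := by
      have : (a:ℝ) ≤ (b':ℝ) := by exact_mod_cast hab'
      linarith
    simp only [Finset.prod_range_zero]
    push_cast
    have h3 : ((b':ℝ) + 1 - ((a:ℝ) + 1) + 1) ≠ 0 := by
      intro h; apply h2; linarith
    field_simp
    ring
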